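/- Let A, B be complex unital Banach algebras with A semisimple, and let φ, ψ : A → B be surjective maps satisfying: for all x, y ∈ A and λ ∈ ℂ, λx + y ∈ G(A) iff λφ(x) + ψ(y) ∈ G(B). Then B is semisimple. -/

import Mathlib

/-- Swap lemma: `1 - x*y` unit implies `1 - y*x` unit. -/
lemma isUnit_one_sub_swap {R : Type*} [Ring R] {x y : R}
    (h : IsUnit (1 - x * y)) : IsUnit (1 - y * x) := by
  refine ⟨⟨1 - y * x, 1 + y * h.unit.inv * x, ?_, ?_⟩, rfl⟩
  · calc
      (1 - y * x) * (1 + y * (IsUnit.unit h).inv * x) =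
          1 - y * x + y * ((1 - x * y) * h.unit.inv) * x := by noncomm_ring
      _ = 1 := by simp only [Units.inv_eq_val_inv, IsUnit.mul_val_inv, mul_one, sub_add_cancel]
  · calc
      (1 + y * (IsUnit.unit h).inv * x) * (1 - y * x) =
          1 - y * x + y * (h.unit.inv * (1 - x * y)) * x := by noncomm_ring
      _ = 1 := by
        simp only [Units.inv_eq_val_inv, IsUnit.val_inv_mul]
        noncomm_ring

lemma isUnit_one_add_swap {R : Type*} [Ring R] {x y : R}
    (h : IsUnit (1 + x * y)) : IsUnit (1 + y * x) := by
  have := isUnit_one_sub_swap (x := -x) (y := y) (by simpa [sub_eq_add_neg] using h)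
  simpa [sub_eq_add_neg] using this

/-- `r` in the Jacobson radical implies `1 + r` is a unit. -/
lemma isUnit_one_add_of_mem_jacobson {R : Type*} [Ring R] {r : R}
    (hr : r ∈ Ideal.jacobson (⊥ : Ideal R)) : IsUnit (1 + r) := by
  obtain ⟨z, hz⟩ := Ideal.mem_jacobson_iff.1 hr 1
  rw [Ideal.mem_bot] at hz
  have hz1 : z * (1 + r) = 1 := by
    linear_combination (norm := noncomm_ring) hz
  -- z = 1 - z * r, and -(z * r) ∈ rad, so z has a left inverse
  have hmem : -(z * r) ∈ Ideal.jacobson (⊥ : Ideal R) := by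
    exact neg_mem (Ideal.mul_mem_left _ z hr)
  obtain ⟨w, hw⟩ := Ideal.mem_jacobson_iff.1 hmem 1
  rw [Ideal.mem_bot] at hw
  have hw1 : w * z = 1 := by
    have hz2 : z = 1 + -(z * r) := by
      have : z * 1 * r + z - 1 = 0 := hz
      linear_combination (norm := noncomm_ring) this
    rw [hz2]
    linear_combination (norm := noncomm_ring) hw
  -- from w * z = 1 and z * (1 + r) = 1, we get 1 + r = w
  have hkey : 1 + r = w := by
    calc 1 + r = (w * z) * (1 + r) := by rw [hw1, one_mul]
    _ = w * (z * (1 + r)) := by rw [mul_assoc]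
    _ = w := by rw [hz1, mul_one]
  refine ⟨⟨1 + r, z, ?_, hz1⟩, rfl⟩
  rw [hkey]; exact hw1

/-- Forward: radical element plus unit is a unit. -/
lemma isUnit_add_of_mem_jacobson {R : Type*} [Ring R] {x : R}
    (hx : x ∈ Ideal.jacobson (⊥ : Ideal R)) {u : R} (hu : IsUnit u) :
    IsUnit (x + u) := by
  obtain ⟨v, rfl⟩ := hu
  have h1 : IsUnit (1 + (↑v⁻¹ : R) * x) :=
    isUnit_one_add_of_mem_jacobson (Ideal.mul_mem_left _ _ hx)
  have : (↑v : R) * (1 + (↑v⁻¹ : R) * x) = x + v := by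
    rw [mul_add, mul_one, ← mul_assoc, Units.mul_inv, one_mul, add_comm]
  rw [← this]
  exact v.isUnit.mul h1

/-- Backward (Banach algebra): if `x + u` is a unit for every unit `u`,
then `x` is in the Jacobson radical. -/
lemma mem_jacobson_of_forall_add_unit {A : Type*} [NormedRing A] [NormedAlgebra ℂ A]
    [CompleteSpace A] {x : A}
    (hx : ∀ u : A, IsUnit u → IsUnit (x + u)) :
    x ∈ Ideal.jacobson (⊥ : Ideal A) := by
  -- step 1: for every unit z, 1 + x * z is a unit
  have step1 : ∀ z : A, IsUnit z → IsUnit (1 + x * z) := by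
    intro z hz
    obtain ⟨v, rfl⟩ := hz
    have : (x + (↑v⁻¹ : A)) * v = 1 + x * v := by
      rw [add_mul, Units.inv_mul, add_comm]
    rw [← this]
    exact (hx _ v⁻¹.isUnit).mul v.isUnit
  -- step 2: for every y, 1 + x * y is a unit (writing y as a sum of two units)
  have step2 : ∀ y : A, IsUnit (1 + x * y) := by
    intro y
    set t : ℂ := ((‖y‖ + 1 : ℝ) : ℂ)
    have ht0 : t ≠ 0 := by
      simp only [t, Ne, Complex.ofReal_eq_zero]
      positivity
    have htu : IsUnit ((algebraMap ℂ A) t) :=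
      (isUnit_iff_ne_zero.2 ht0).map (algebraMap ℂ A)
    -- u := y + t • 1 is a unit
    have hnorm : ‖-(t⁻¹ • y)‖ < 1 := by
      rw [norm_neg, norm_smul]
      have htpos : (0:ℝ) < ‖y‖ + 1 := by positivity
      have : ‖t⁻¹‖ = (‖y‖ + 1)⁻¹ := by
        rw [norm_inv]
        simp only [t]
        rw [Complex.norm_real, Real.norm_of_nonneg htpos.le]
      rw [this, inv_mul_lt_one₀ htpos]
      linarith
    have hu : IsUnit (y + (algebraMap ℂ A) t) := by
      have h1 : IsUnit ((1 : A) - (-(t⁻¹ • y))) := isUnit_one_sub_of_norm_lt_one hnorm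
      have h2 : (algebraMap ℂ A) t * ((1 : A) - (-(t⁻¹ • y))) = y + (algebraMap ℂ A) t := by
        rw [sub_neg_eq_add, mul_add, mul_one, Algebra.algebraMap_eq_smul_one, smul_mul_assoc,
          one_mul, smul_smul, mul_inv_cancel₀ ht0, one_smul, add_comm]
      rw [← h2]
      exact htu.mul h1
    -- w := 1 + x * u is a unit
    have hw : IsUnit (1 + x * (y + (algebraMap ℂ A) t)) := step1 _ hu
    obtain ⟨w, hw'⟩ := hw
    -- v := -(algebraMap ℂ A t) is a unit; v * w⁻¹ is a unit
    have hv : IsUnit (-(algebraMap ℂ A) t) := htu.neg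
    have hvw : IsUnit ((-(algebraMap ℂ A) t) * (↑w⁻¹ : A)) := hv.mul w⁻¹.isUnit
    have hfin : IsUnit (1 + x * ((-(algebraMap ℂ A) t) * (↑w⁻¹ : A))) := step1 _ hvw
    have hdec : (1 + x * ((-(algebraMap ℂ A) t) * (↑w⁻¹ : A))) * (↑w : A) = 1 + x * y := by
      rw [add_mul, one_mul, mul_assoc, mul_assoc, Units.inv_mul, mul_one, hw']
      noncomm_ring
    rw [← hdec] at *
    exact hfin.mul w.isUnit
  -- conclude via mem_jacobson_iff
  rw [Ideal.mem_jacobson_iff]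
  intro y
  have := isUnit_one_add_swap (step2 y)
  obtain ⟨v, hv⟩ := this
  refine ⟨(↑v⁻¹ : A), ?_⟩
  rw [Ideal.mem_bot, sub_eq_zero]
  calc (↑v⁻¹ : A) * y * x + (↑v⁻¹ : A) = (↑v⁻¹ : A) * (1 + y * x) := by noncomm_ring
  _ = (↑v⁻¹ : A) * v := by rw [hv]
  _ = 1 := Units.inv_mul v

theorem codomain_semisimple {A B : Type*} [NormedRing A] [NormedAlgebra ℂ A]
    [CompleteSpace A] [NormedRing B] [NormedAlgebra ℂ B] [CompleteSpace B]
    (hA : Ideal.jacobson (⊥ : Ideal A) = ⊥) (φ ψ : A → B)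
    (hφ : Function.Surjective φ) (hψ : Function.Surjective ψ)
    (h : ∀ (x y : A) (lam : ℂ), IsUnit (lam • x + y) ↔ IsUnit (lam • φ x + ψ y)) :
    Ideal.jacobson (⊥ : Ideal B) = ⊥ := by
  -- ψ preserves units in both directions
  have hψunit : ∀ u : A, IsUnit u ↔ IsUnit (ψ u) := by
    intro u
    have := h 0 u 0
    simpa using this
  refine le_antisymm ?_ bot_le
  intro b hb
  rw [Ideal.mem_bot]
  -- key claim: every element of the radical of B is of the form φ x with x = 0
  have key : ∀ c : B, c ∈ Ideal.jacobson (⊥ : Ideal B) → ∃ x : A, φ x = c ∧ x = 0 := by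
    intro c hc
    obtain ⟨x, hx⟩ := hφ c
    refine ⟨x, hx, ?_⟩
    have hxrad : x ∈ Ideal.jacobson (⊥ : Ideal A) := by
      apply mem_jacobson_of_forall_add_unit
      intro u hu
      have h1 := h x u 1
      rw [one_smul, one_smul, hx] at h1
      exact h1.2 (isUnit_add_of_mem_jacobson hc ((hψunit u).1 hu))
    rw [hA] at hxrad
    exact Ideal.mem_bot.1 hxrad
  -- first, φ 0 = 0 (apply key to 0 ∈ rad B)
  have hφ0 : φ 0 = 0 := by
    obtain ⟨x, hx, hx0⟩ := key 0 (Ideal.jacobson (⊥ : Ideal B)).zero_mem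
    rw [← hx, hx0]
  obtain ⟨x, hx, hx0⟩ := key b hb
  rw [← hx, hx0, hφ0]
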